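/- For θ ∈ ℝ define X_θ : ℝ² → ℝ⁴ by X_θ(u, v) := cos θ · (sinh u · sin u, sinh u · cos u, cosh u · sinh v, cosh u · cosh v) + sin θ · (−cos u · cos v, sin u · cos v, cosh v · sin v, sinh v · sin v). Then for all (u, v) ∈ ℝ²: ⟨∂_u X_θ, ∂_u X_θ⟩ = ⟨∂_v X_θ, ∂_v X_θ⟩ = (cos θ · cosh u + sin θ · cos v)² and ⟨∂_u X_θ, ∂_v X_θ⟩ = 0, where ⟨·,·⟩ is the Lorentz bilinear form on ℝ⁴. In particular, on any open set where cos θ · cosh u + sin θ · cos v ≠ 0, X_θ is a conformal spacelike immersion with induced metric (cos θ · cosh u + sin θ · cos v)²·(du² + dv²). -/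

import Mathlib

/-- The Lorentz bilinear form on ℝ⁴ (Lorentz–Minkowski space 𝕃⁴). -/
def lorR (x y : Fin 4 → ℝ) : ℝ := x 0 * y 0 + x 1 * y 1 + x 2 * y 2 - x 3 * y 3

/-- Partial derivative of a map `ℝ² → ℝ⁴` in the first variable. -/
noncomputable def pd1 (X : ℝ → ℝ → Fin 4 → ℝ) (u v : ℝ) : Fin 4 → ℝ :=
  fun i => deriv (fun t => X t v i) u

/-- Partial derivative of a map `ℝ² → ℝ⁴` in the second variable. -/
noncomputable def pd2 (X : ℝ → ℝ → Fin 4 → ℝ) (u v : ℝ) : Fin 4 → ℝ :=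
  fun i => deriv (fun t => X u t i) v

/-- Second partial derivative `∂_u ∂_u` of a map `ℝ² → ℝ⁴`. -/
noncomputable def pd11 (X : ℝ → ℝ → Fin 4 → ℝ) (u v : ℝ) : Fin 4 → ℝ :=
  fun i => deriv (fun t => deriv (fun s => X s v i) t) u

/-- Second partial derivative `∂_v ∂_v` of a map `ℝ² → ℝ⁴`. -/
noncomputable def pd22 (X : ℝ → ℝ → Fin 4 → ℝ) (u v : ℝ) : Fin 4 → ℝ :=
  fun i => deriv (fun t => deriv (fun s => X u s i) t) v


lemma pd1X (θ : ℝ) (X : ℝ → ℝ → Fin 4 → ℝ)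
    (hX : ∀ u v, X u v = fun i =>
      Real.cos θ * ![Real.sinh u * Real.sin u, Real.sinh u * Real.cos u,
        Real.cosh u * Real.sinh v, Real.cosh u * Real.cosh v] i
      + Real.sin θ * ![-(Real.cos u * Real.cos v), Real.sin u * Real.cos v,
        Real.cosh v * Real.sin v, Real.sinh v * Real.sin v] i) (u v : ℝ) :
    pd1 X u v = fun i =>
      Real.cos θ * ![Real.cosh u * Real.sin u + Real.sinh u * Real.cos u,
        Real.cosh u * Real.cos u - Real.sinh u * Real.sin u,
        Real.sinh u * Real.sinh v, Real.sinh u * Real.cosh v] i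
      + Real.sin θ * ![Real.sin u * Real.cos v, Real.cos u * Real.cos v, 0, 0] i := by
  funext i
  show deriv (fun t => X t v i) u = _
  have hf : (fun t => X t v i) = fun t =>
      Real.cos θ * ![Real.sinh t * Real.sin t, Real.sinh t * Real.cos t,
        Real.cosh t * Real.sinh v, Real.cosh t * Real.cosh v] i
      + Real.sin θ * ![-(Real.cos t * Real.cos v), Real.sin t * Real.cos v,
        Real.cosh v * Real.sin v, Real.sinh v * Real.sin v] i := by
    funext t; rw [hX]
  rw [hf]
  fin_cases i <;>
    simp only [Matrix.cons_val_zero, Matrix.cons_val_one, Matrix.head_cons,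
      Matrix.cons_val_two, Matrix.tail_cons, Matrix.cons_val_three, Matrix.head_fin_const,
      Fin.isValue]
  · have h : HasDerivAt (fun t => Real.cos θ * (Real.sinh t * Real.sin t)
        + Real.sin θ * -(Real.cos t * Real.cos v))
        (Real.cos θ * (Real.cosh u * Real.sin u + Real.sinh u * Real.cos u)
          + Real.sin θ * (Real.sin u * Real.cos v)) u := by
      have h1 := ((Real.hasDerivAt_sinh u).mul (Real.hasDerivAt_sin u)).const_mul (Real.cos θ)
      have h2 := (((Real.hasDerivAt_cos u).mul_const (Real.cos v)).neg).const_mul (Real.sin θ)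
      exact (h1.add h2).congr_deriv (by ring)
    exact h.deriv
  · have h : HasDerivAt (fun t => Real.cos θ * (Real.sinh t * Real.cos t)
        + Real.sin θ * (Real.sin t * Real.cos v))
        (Real.cos θ * (Real.cosh u * Real.cos u - Real.sinh u * Real.sin u)
          + Real.sin θ * (Real.cos u * Real.cos v)) u := by
      have h1 := ((Real.hasDerivAt_sinh u).mul (Real.hasDerivAt_cos u)).const_mul (Real.cos θ)
      have h2 := ((Real.hasDerivAt_sin u).mul_const (Real.cos v)).const_mul (Real.sin θ)
      exact (h1.add h2).congr_deriv (by ring)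
    exact h.deriv
  · have h : HasDerivAt (fun t => Real.cos θ * (Real.cosh t * Real.sinh v)
        + Real.sin θ * (Real.cosh v * Real.sin v))
        (Real.cos θ * (Real.sinh u * Real.sinh v) + Real.sin θ * 0) u := by
      have h1 := (((Real.hasDerivAt_cosh u).mul_const (Real.sinh v)).const_mul (Real.cos θ)).add_const
        (Real.sin θ * (Real.cosh v * Real.sin v))
      exact h1.congr_deriv (by ring)
    exact h.deriv
  · have h : HasDerivAt (fun t => Real.cos θ * (Real.cosh t * Real.cosh v)
        + Real.sin θ * (Real.sinh v * Real.sin v))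
        (Real.cos θ * (Real.sinh u * Real.cosh v) + Real.sin θ * 0) u := by
      have h1 := (((Real.hasDerivAt_cosh u).mul_const (Real.cosh v)).const_mul (Real.cos θ)).add_const
        (Real.sin θ * (Real.sinh v * Real.sin v))
      exact h1.congr_deriv (by ring)
    exact h.deriv

lemma pd2X (θ : ℝ) (X : ℝ → ℝ → Fin 4 → ℝ)
    (hX : ∀ u v, X u v = fun i =>
      Real.cos θ * ![Real.sinh u * Real.sin u, Real.sinh u * Real.cos u,
        Real.cosh u * Real.sinh v, Real.cosh u * Real.cosh v] i
      + Real.sin θ * ![-(Real.cos u * Real.cos v), Real.sin u * Real.cos v,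
        Real.cosh v * Real.sin v, Real.sinh v * Real.sin v] i) (u v : ℝ) :
    pd2 X u v = fun i =>
      Real.cos θ * ![0, 0, Real.cosh u * Real.cosh v, Real.cosh u * Real.sinh v] i
      + Real.sin θ * ![Real.cos u * Real.sin v, -(Real.sin u * Real.sin v),
        Real.sinh v * Real.sin v + Real.cosh v * Real.cos v,
        Real.cosh v * Real.sin v + Real.sinh v * Real.cos v] i := by
  funext i
  show deriv (fun t => X u t i) v = _
  have hf : (fun t => X u t i) = fun t =>
      Real.cos θ * ![Real.sinh u * Real.sin u, Real.sinh u * Real.cos u,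
        Real.cosh u * Real.sinh t, Real.cosh u * Real.cosh t] i
      + Real.sin θ * ![-(Real.cos u * Real.cos t), Real.sin u * Real.cos t,
        Real.cosh t * Real.sin t, Real.sinh t * Real.sin t] i := by
    funext t; rw [hX]
  rw [hf]
  fin_cases i <;>
    simp only [Matrix.cons_val_zero, Matrix.cons_val_one, Matrix.head_cons,
      Matrix.cons_val_two, Matrix.tail_cons, Matrix.cons_val_three, Matrix.head_fin_const,
      Fin.isValue]
  · have h : HasDerivAt (fun t => Real.cos θ * (Real.sinh u * Real.sin u)
        + Real.sin θ * -(Real.cos u * Real.cos t))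
        (Real.cos θ * 0 + Real.sin θ * (Real.cos u * Real.sin v)) v := by
      have h2 := (((Real.hasDerivAt_cos v).const_mul (Real.cos u)).neg).const_mul (Real.sin θ)
      exact (h2.const_add (Real.cos θ * (Real.sinh u * Real.sin u))).congr_deriv (by ring)
    exact h.deriv
  · have h : HasDerivAt (fun t => Real.cos θ * (Real.sinh u * Real.cos u)
        + Real.sin θ * (Real.sin u * Real.cos t))
        (Real.cos θ * 0 + Real.sin θ * -(Real.sin u * Real.sin v)) v := by
      have h2 := (((Real.hasDerivAt_cos v).const_mul (Real.sin u))).const_mul (Real.sin θ)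
      exact (h2.const_add (Real.cos θ * (Real.sinh u * Real.cos u))).congr_deriv (by ring)
    exact h.deriv
  · have h : HasDerivAt (fun t => Real.cos θ * (Real.cosh u * Real.sinh t)
        + Real.sin θ * (Real.cosh t * Real.sin t))
        (Real.cos θ * (Real.cosh u * Real.cosh v)
          + Real.sin θ * (Real.sinh v * Real.sin v + Real.cosh v * Real.cos v)) v := by
      have h1 := ((Real.hasDerivAt_sinh v).const_mul (Real.cosh u)).const_mul (Real.cos θ)
      have h2 := ((Real.hasDerivAt_cosh v).mul (Real.hasDerivAt_sin v)).const_mul (Real.sin θ)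
      exact (h1.add h2).congr_deriv (by ring)
    exact h.deriv
  · have h : HasDerivAt (fun t => Real.cos θ * (Real.cosh u * Real.cosh t)
        + Real.sin θ * (Real.sinh t * Real.sin t))
        (Real.cos θ * (Real.cosh u * Real.sinh v)
          + Real.sin θ * (Real.cosh v * Real.sin v + Real.sinh v * Real.cos v)) v := by
      have h1 := ((Real.hasDerivAt_cosh v).const_mul (Real.cosh u)).const_mul (Real.cos θ)
      have h2 := ((Real.hasDerivAt_sinh v).mul (Real.hasDerivAt_sin v)).const_mul (Real.sin θ)
      exact (h1.add h2).congr_deriv (by ring)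
    exact h.deriv

/-- The family `X_θ` is conformal with induced metric
`(cos θ cosh u + sin θ cos v)² (du² + dv²)`. -/
theorem stmt_16 (θ : ℝ) (X : ℝ → ℝ → Fin 4 → ℝ)
    (hX : ∀ u v, X u v = fun i =>
      Real.cos θ * ![Real.sinh u * Real.sin u, Real.sinh u * Real.cos u,
        Real.cosh u * Real.sinh v, Real.cosh u * Real.cosh v] i
      + Real.sin θ * ![-(Real.cos u * Real.cos v), Real.sin u * Real.cos v,
        Real.cosh v * Real.sin v, Real.sinh v * Real.sin v] i) :
    (∀ u v, lorR (pd1 X u v) (pd1 X u v)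
        = (Real.cos θ * Real.cosh u + Real.sin θ * Real.cos v) ^ 2) ∧
    (∀ u v, lorR (pd2 X u v) (pd2 X u v)
        = (Real.cos θ * Real.cosh u + Real.sin θ * Real.cos v) ^ 2) ∧
    (∀ u v, lorR (pd1 X u v) (pd2 X u v) = 0) ∧
    (∀ u v, Real.cos θ * Real.cosh u + Real.sin θ * Real.cos v ≠ 0 →
      0 < lorR (pd1 X u v) (pd1 X u v) ∧ 0 < lorR (pd2 X u v) (pd2 X u v)) := by
  have H1 : ∀ u v, lorR (pd1 X u v) (pd1 X u v)
      = (Real.cos θ * Real.cosh u + Real.sin θ * Real.cos v) ^ 2 := by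
    intro u v
    rw [pd1X θ X hX u v]
    simp only [lorR, Matrix.cons_val_zero, Matrix.cons_val_one, Matrix.head_cons,
      Matrix.cons_val_two, Matrix.tail_cons, Matrix.cons_val_three, Fin.isValue]
    have h1 := Real.sin_sq_add_cos_sq u
    have h2 := Real.cosh_sq_sub_sinh_sq v
    linear_combination (Real.cos θ^2*(Real.cosh u^2 + Real.sinh u^2)
      + 2*Real.cos θ*Real.sin θ*Real.cos v*Real.cosh u + Real.sin θ^2*Real.cos v^2) * h1
      - (Real.cos θ^2 * Real.sinh u^2) * h2
  have H2 : ∀ u v, lorR (pd2 X u v) (pd2 X u v)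
      = (Real.cos θ * Real.cosh u + Real.sin θ * Real.cos v) ^ 2 := by
    intro u v
    rw [pd2X θ X hX u v]
    simp only [lorR, Matrix.cons_val_zero, Matrix.cons_val_one, Matrix.head_cons,
      Matrix.cons_val_two, Matrix.tail_cons, Matrix.cons_val_three, Fin.isValue]
    have h1 := Real.sin_sq_add_cos_sq u
    have h2 := Real.cosh_sq_sub_sinh_sq v
    linear_combination (Real.sin θ^2 * Real.sin v^2) * h1
      + (Real.cos θ^2 * Real.cosh u^2 + 2*Real.cos θ*Real.sin θ*Real.cosh u*Real.cos v
        + Real.sin θ^2*(Real.cos v^2 - Real.sin v^2)) * h2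
  have H3 : ∀ u v, lorR (pd1 X u v) (pd2 X u v) = 0 := by
    intro u v
    rw [pd1X θ X hX u v, pd2X θ X hX u v]
    simp only [lorR, Matrix.cons_val_zero, Matrix.cons_val_one, Matrix.head_cons,
      Matrix.cons_val_two, Matrix.tail_cons, Matrix.cons_val_three, Fin.isValue]
    have h1 := Real.sin_sq_add_cos_sq u
    have h2 := Real.cosh_sq_sub_sinh_sq v
    linear_combination (Real.sin θ * Real.cos θ * Real.sinh u * Real.sin v) * h1
      - (Real.cos θ * Real.sin θ * Real.sinh u * Real.sin v) * h2
  refine ⟨H1, H2, H3, fun u v h => ?_⟩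
  rw [H1, H2]
  constructor <;> positivity
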